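/- arXiv:math-ph/0409001 — 7 statements merged into one kernel-verified Lean document; each statement's English description precedes it below -/
import Mathlib

section
/- Let A ∈ ℂ³ and let cF(A) be the 4×4 complex matrix with block form [[0, Aᵗ],[A, ×(-iA)]], where ×(w) denotes the 3×3 matrix of cross product by w (i.e. ×(w)v = v × w). Then cF(A)² = ⟨A,A⟩·I, where ⟨·,·⟩ is the complex-bilinear extension of the Euclidean inner product on ℂ³. -/
open Matrix

noncomputable section

/-- Cross product `v × w`. -/
def crossVec {α : Type*} [CommRing α] (v w : Fin 3 → α) : Fin 3 → α :=
  ![v 1 * w 2 - v 2 * w 1, v 2 * w 0 - v 0 * w 2, v 0 * w 1 - v 1 * w 0]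

/-- The matrix `×w`, satisfying `(×w) v = v × w`. -/
def crossMat {α : Type*} [CommRing α] (w : Fin 3 → α) : Matrix (Fin 3) (Fin 3) α :=
  !![0, w 2, -(w 1); -(w 2), 0, w 0; w 1, -(w 0), 0]

/-- The block matrix `[[0, Aᵗ],[A, ×C]]`. -/
def blockM {α : Type*} [CommRing α] (A C : Fin 3 → α) : Matrix (Fin 4) (Fin 4) α :=
  !![0,     A 0,      A 1,      A 2;
     A 0,   0,        C 2,      -(C 1);
     A 1,   -(C 2),   0,        C 0;
     A 2,   C 1,      -(C 0),   0]

/-- `cF(A) = [[0, Aᵗ],[A, ×(-iA)]]`. -/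
def cF (A : Fin 3 → ℂ) : Matrix (Fin 4) (Fin 4) ℂ := blockM A ((-Complex.I) • A)

/-- `c̄F(A) = [[0, Aᵗ],[A, ×(iA)]]`. -/
def cFbar (A : Fin 3 → ℂ) : Matrix (Fin 4) (Fin 4) ℂ := blockM A (Complex.I • A)

/-- The complex-bilinear inner product on ℂ³. -/
def bilin (v w : Fin 3 → ℂ) : ℂ := v 0 * w 0 + v 1 * w 1 + v 2 * w 2

theorem cF_sq (A : Fin 3 → ℂ) :
    cF A * cF A = bilin A A • (1 : Matrix (Fin 4) (Fin 4) ℂ) := by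
  have h : Complex.I * Complex.I = -1 := Complex.I_mul_I
  ext i j
  simp only [cF, blockM, bilin, Pi.smul_apply, smul_eq_mul]
  fin_cases i <;> fin_cases j <;>
    simp [Matrix.mul_apply, Fin.sum_univ_succ, Matrix.one_apply] <;> ring_nf <;>
    simp [Complex.I_sq] <;> ring
end
end

section
/- For A₁, A₂ ∈ ℂ³, with cF(A) the 4×4 matrix [[0, Aᵗ],[A, ×(-iA)]], one has cF(A₁)·cF(A₂) + cF(A₂)·cF(A₁) = 2⟨A₁,A₂⟩·I, where ⟨·,·⟩ is the complex-bilinear inner product on ℂ³. -/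
open Matrix

noncomputable section

set_option maxHeartbeats 4000000 in
theorem cF_anticommutator (A₁ A₂ : Fin 3 → ℂ) :
    cF A₁ * cF A₂ + cF A₂ * cF A₁
      = (2 * bilin A₁ A₂) • (1 : Matrix (Fin 4) (Fin 4) ℂ) := by
  unfold cF blockM bilin
  ext i j
  fin_cases i <;> fin_cases j <;>
    · simp [Matrix.mul_apply, Fin.sum_univ_four, Matrix.one_apply, Fin.ext_iff]
      ring_nf
      try simp only [Complex.I_sq]
      try ring
      try rw [if_neg (by omega)]
end
end

section
/- For any A₁, A₂ ∈ ℂ³, the matrices cF(A₁) = [[0, A₁ᵗ],[A₁, ×(-iA₁)]] and c̄F(A₂) = [[0, A₂ᵗ],[A₂, ×(iA₂)]] commute: cF(A₁)·c̄F(A₂) = c̄F(A₂)·cF(A₁). -/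
open Matrix

noncomputable section

theorem cF_commutes_cFbar (A₁ A₂ : Fin 3 → ℂ) :
    cF A₁ * cFbar A₂ = cFbar A₂ * cF A₁ := by
  ext i j
  simp only [cF, cFbar, blockM, Pi.smul_apply, smul_eq_mul, mul_apply, Fin.sum_univ_four]
  fin_cases i <;> fin_cases j <;>
    simp [Matrix.cons_val_zero, Matrix.cons_val_one] <;> ring_nf <;>
    simp [Complex.I_sq] <;> ring
end
end

section
/- Among all 4×4 complex matrices of the block form M(A,C) = [[0, Aᵗ],[A, ×(C)]] with A, C ∈ ℂ³ and A ≠ 0, the square M(A,C)² is a scalar multiple of the identity if and only if C = iA or C = -iA. -/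
open Matrix

noncomputable section

private lemma step_aux (a b x y s : ℂ) (ha : a ≠ 0) (h : a * y - b * x = 0)
    (hx : x = s * a) : y = s * b := by
  have h' : a * (y - s * b) = 0 := by linear_combination h + b * hx
  rcases mul_eq_zero.1 h' with h'' | h''
  · exact absurd h'' ha
  · linear_combination h''

private lemma sign_aux (a c : ℂ) (d : c ^ 2 + a ^ 2 = 0) :
    c = Complex.I * a ∨ c = -Complex.I * a := by
  have f : (c - Complex.I * a) * (c + Complex.I * a) = 0 := by
    linear_combination d - a ^ 2 * Complex.I_mul_I
  rcases mul_eq_zero.1 f with f' | f'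
  · left; linear_combination f'
  · right; linear_combination f'

private lemma solve_aux (a0 a1 a2 c0 c1 c2 : ℂ)
    (h0 : a1 * c2 - a2 * c1 = 0) (h1 : a2 * c0 - a0 * c2 = 0) (h2 : a0 * c1 - a1 * c0 = 0)
    (d0 : c0 ^ 2 + a0 ^ 2 = 0) (d1 : c1 ^ 2 + a1 ^ 2 = 0) (d2 : c2 ^ 2 + a2 ^ 2 = 0)
    (hne : a0 ≠ 0 ∨ a1 ≠ 0 ∨ a2 ≠ 0) :
    (c0 = Complex.I * a0 ∧ c1 = Complex.I * a1 ∧ c2 = Complex.I * a2) ∨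
    (c0 = -Complex.I * a0 ∧ c1 = -Complex.I * a1 ∧ c2 = -Complex.I * a2) := by
  rcases hne with ha | ha | ha
  · rcases sign_aux a0 c0 d0 with f | f
    · exact Or.inl ⟨f, step_aux a0 a1 c0 c1 _ ha h2 f,
        step_aux a0 a2 c0 c2 _ ha (by linear_combination -h1) f⟩
    · exact Or.inr ⟨f, step_aux a0 a1 c0 c1 _ ha h2 f,
        step_aux a0 a2 c0 c2 _ ha (by linear_combination -h1) f⟩
  · rcases sign_aux a1 c1 d1 with f | f
    · exact Or.inl ⟨step_aux a1 a0 c1 c0 _ ha (by linear_combination -h2) f, f,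
        step_aux a1 a2 c1 c2 _ ha h0 f⟩
    · exact Or.inr ⟨step_aux a1 a0 c1 c0 _ ha (by linear_combination -h2) f, f,
        step_aux a1 a2 c1 c2 _ ha h0 f⟩
  · rcases sign_aux a2 c2 d2 with f | f
    · exact Or.inl ⟨step_aux a2 a0 c2 c0 _ ha h1 f,
        step_aux a2 a1 c2 c1 _ ha (by linear_combination -h0) f, f⟩
    · exact Or.inr ⟨step_aux a2 a0 c2 c0 _ ha h1 f,
        step_aux a2 a1 c2 c1 _ ha (by linear_combination -h0) f, f⟩

theorem blockM_sq_scalar_iff (A C : Fin 3 → ℂ) (hA : A ≠ 0) :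
    (∃ c : ℂ, blockM A C * blockM A C = c • (1 : Matrix (Fin 4) (Fin 4) ℂ)) ↔
      C = Complex.I • A ∨ C = (-Complex.I) • A := by
  constructor
  · rintro ⟨c, h⟩
    have key : ∀ i j, (blockM A C * blockM A C) i j = c • (1 : Matrix (Fin 4) (Fin 4) ℂ) i j :=
      fun i j => by rw [h]; rfl
    have e01 := key 0 1
    have e02 := key 0 2
    have e03 := key 0 3
    have e12 := key 1 2
    have e13 := key 1 3
    have e23 := key 2 3
    have e00 := key 0 0
    have e11 := key 1 1
    have e22 := key 2 2
    have e33 := key 3 3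
    simp [blockM, Matrix.mul_apply, Fin.sum_univ_four, Matrix.one_apply] at e01 e02 e03 e12 e13 e23 e00 e11 e22 e33
    have hne : A 0 ≠ 0 ∨ A 1 ≠ 0 ∨ A 2 ≠ 0 := by
      by_contra hc
      push_neg at hc
      exact hA (by funext i; fin_cases i <;> simp [hc.1, hc.2.1, hc.2.2])
    have d0 : C 0 ^ 2 + A 0 ^ 2 = 0 := by linear_combination (e00 + e11 - e22 - e33) / 2
    have d1 : C 1 ^ 2 + A 1 ^ 2 = 0 := by linear_combination (e00 - e11 + e22 - e33) / 2
    have d2 : C 2 ^ 2 + A 2 ^ 2 = 0 := by linear_combination (e00 - e11 - e22 + e33) / 2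
    have h0 : A 1 * C 2 - A 2 * C 1 = 0 := by linear_combination -e01
    have h1 : A 2 * C 0 - A 0 * C 2 = 0 := by linear_combination -e02
    have h2 : A 0 * C 1 - A 1 * C 0 = 0 := by linear_combination -e03
    rcases solve_aux (A 0) (A 1) (A 2) (C 0) (C 1) (C 2) h0 h1 h2 d0 d1 d2 hne with
      ⟨p0, p1, p2⟩ | ⟨p0, p1, p2⟩
    · left; funext i; fin_cases i <;> simpa [Pi.smul_apply, smul_eq_mul]
        using by assumption
    · rw [neg_mul] at p0 p1 p2
      right; funext i; fin_cases i <;> simpa [Pi.smul_apply, smul_eq_mul]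
        using by assumption
  · rintro (rfl | rfl) <;>
    · refine ⟨bilin A A, ?_⟩
      ext i j
      fin_cases i <;> fin_cases j <;>
        simp [blockM, bilin, Matrix.mul_apply, Fin.sum_univ_four, Matrix.one_apply,
          Matrix.smul_apply, Pi.smul_apply, smul_eq_mul] <;>
        ring_nf <;> simp [Complex.I_sq] <;> ring
end
end

section
/- Let E, B : ℝ⁴ → ℝ³ be smooth and set cF = [[0, (E+iB)ᵗ],[E+iB, ×(-i(E+iB))]]. Then the single complex matrix equation cF·(-∂ₜ, ∇)ᵗ = (ρ, J)ᵗ holds if and only if E and B satisfy Maxwell's equations with charge density ρ and current J. -/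
open Matrix

noncomputable section

/-- Points of space-time `ℝ⁴`, coordinate `0` is time. -/
abbrev Pt := Fin 4 → ℝ

/-- Partial derivative in the `i`-th coordinate direction. -/
def pd {E : Type*} [NormedAddCommGroup E] [NormedSpace ℝ E]
    (i : Fin 4) (f : Pt → E) (x : Pt) : E := fderiv ℝ f x (Pi.single i 1)

/-- Spatial divergence `∇·A`. -/
def divg {E : Type*} [NormedAddCommGroup E] [NormedSpace ℝ E]
    (A : Pt → Fin 3 → E) (x : Pt) : E := ∑ i : Fin 3, pd i.succ (fun y => A y i) x

/-- Spatial curl `∇×A`. -/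
def curl {E : Type*} [NormedAddCommGroup E] [NormedSpace ℝ E]
    (A : Pt → Fin 3 → E) (x : Pt) : Fin 3 → E :=
  ![pd 2 (fun y => A y 2) x - pd 3 (fun y => A y 1) x,
    pd 3 (fun y => A y 0) x - pd 1 (fun y => A y 2) x,
    pd 1 (fun y => A y 1) x - pd 2 (fun y => A y 0) x]

/-- Spatial gradient `∇f`. -/
def grad {E : Type*} [NormedAddCommGroup E] [NormedSpace ℝ E]
    (f : Pt → E) (x : Pt) : Fin 3 → E := fun i => pd i.succ f x

/-- Time derivative of a vector field, componentwise. -/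
def pdtV {E : Type*} [NormedAddCommGroup E] [NormedSpace ℝ E]
    (A : Pt → Fin 3 → E) (x : Pt) : Fin 3 → E := fun i => pd 0 (fun y => A y i) x

/-- Spatial Laplacian `∇²f`. -/
def lap {E : Type*} [NormedAddCommGroup E] [NormedSpace ℝ E]
    (f : Pt → E) (x : Pt) : E := ∑ i : Fin 3, pd i.succ (pd i.succ f) x

/-- The matrix divergence `M·(-∂ₜ,∇)ᵗ`: `i`-th component `-∂ₜ(M_{i0}) + Σⱼ ∂ⱼ(M_{ij})`. -/
def divNeg {E : Type*} [NormedAddCommGroup E] [NormedSpace ℝ E]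
    (M : Pt → Matrix (Fin 4) (Fin 4) E) (x : Pt) : Fin 4 → E :=
  fun i => -(pd 0 (fun y => M y i 0) x) + ∑ j : Fin 3, pd j.succ (fun y => M y i j.succ) x

/-- The matrix divergence `M·(∂ₜ,∇)ᵗ`: `i`-th component `∂ₜ(M_{i0}) + Σⱼ ∂ⱼ(M_{ij})`. -/
def divPos {E : Type*} [NormedAddCommGroup E] [NormedSpace ℝ E]
    (M : Pt → Matrix (Fin 4) (Fin 4) E) (x : Pt) : Fin 4 → E :=
  fun i => pd 0 (fun y => M y i 0) x + ∑ j : Fin 3, pd j.succ (fun y => M y i j.succ) x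

/-- Maxwell's equations (1)-(4). -/
def MaxwellEq {E' : Type*} [NormedAddCommGroup E'] [NormedSpace ℝ E']
    (E B : Pt → Fin 3 → E') (ρ : Pt → E') (J : Pt → Fin 3 → E') : Prop :=
  (∀ x i, curl E x i + pdtV B x i = 0) ∧
  (∀ x i, curl B x i - pdtV E x i = J x i) ∧
  (∀ x, divg E x = ρ x) ∧
  (∀ x, divg B x = 0)

lemma pd_lin (a b : ℂ) (f g : Pt → ℝ) (hf : Differentiable ℝ f)
    (hg : Differentiable ℝ g) (i : Fin 4) (x : Pt) :
    pd i (fun y => a * (f y : ℂ) + b * (g y : ℂ)) x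
      = a * pd i f x + b * pd i g x := by
  unfold pd
  have hf' : HasFDerivAt (fun y => ((f y : ℂ)))
      (Complex.ofRealCLM.comp (fderiv ℝ f x)) x :=
    Complex.ofRealCLM.hasFDerivAt.comp x (hf x).hasFDerivAt
  have hg' : HasFDerivAt (fun y => ((g y : ℂ)))
      (Complex.ofRealCLM.comp (fderiv ℝ g x)) x :=
    Complex.ofRealCLM.hasFDerivAt.comp x (hg x).hasFDerivAt
  rw [HasFDerivAt.fderiv (f := fun y => a * (f y : ℂ) + b * (g y : ℂ))
    ((hf'.const_mul a).add (hg'.const_mul b))]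
  simp

lemma comp_diff {E : Pt → Fin 3 → ℝ} (hE : Differentiable ℝ E) (p : Fin 3) :
    Differentiable ℝ (fun y => E y p) :=
  (ContinuousLinearMap.proj (R := ℝ) (φ := fun _ : Fin 3 => ℝ) p).differentiable.comp hE

lemma pd_A {E B : Pt → Fin 3 → ℝ} (hE : Differentiable ℝ E) (hB : Differentiable ℝ B)
    (p : Fin 3) (i : Fin 4) (x : Pt) :
    pd i (fun y => (E y p : ℂ) + Complex.I * B y p) x
      = Complex.ofReal (pd i (fun y => E y p) x)
        + Complex.I * Complex.ofReal (pd i (fun y => B y p) x) := by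
  have h := pd_lin 1 Complex.I (fun y => E y p) (fun y => B y p)
    (comp_diff hE p) (comp_diff hB p) i x
  simpa using h

lemma pd_cA {E B : Pt → Fin 3 → ℝ} (hE : Differentiable ℝ E) (hB : Differentiable ℝ B)
    (c : ℂ) (p : Fin 3) (i : Fin 4) (x : Pt) :
    pd i (fun y => c * ((E y p : ℂ) + Complex.I * B y p)) x
      = c * (Complex.ofReal (pd i (fun y => E y p) x)
          + Complex.I * Complex.ofReal (pd i (fun y => B y p) x)) := by
  have h := pd_lin c (c * Complex.I) (fun y => E y p) (fun y => B y p)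
    (comp_diff hE p) (comp_diff hB p) i x
  rw [show (fun y => c * ((E y p : ℂ) + Complex.I * B y p))
      = fun y => c * (E y p : ℂ) + (c * Complex.I) * (B y p : ℂ) from funext fun y => by ring,
    h]
  ring

lemma pd_cA' {E B : Pt → Fin 3 → ℝ} (hE : Differentiable ℝ E) (hB : Differentiable ℝ B)
    (c : ℂ) (p : Fin 3) (i : Fin 4) (x : Pt) :
    pd i (fun y => -(c * ((E y p : ℂ) + Complex.I * B y p))) x
      = -(c * (Complex.ofReal (pd i (fun y => E y p) x)
          + Complex.I * Complex.ofReal (pd i (fun y => B y p) x))) := by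
  have h := pd_lin (-c) (-(c * Complex.I)) (fun y => E y p) (fun y => B y p)
    (comp_diff hE p) (comp_diff hB p) i x
  rw [show (fun y => -(c * ((E y p : ℂ) + Complex.I * B y p)))
      = fun y => (-c) * (E y p : ℂ) + (-(c * Complex.I)) * (B y p : ℂ) from
        funext fun y => by ring, h]
  ring

lemma pd_zeroC (i : Fin 4) (x : Pt) : pd i (fun _ : Pt => (0:ℂ)) x = 0 := by
  simp [pd]

lemma fin3_mk2 (h : 2 < 3) : (⟨2, h⟩ : Fin 3) = 2 := rfl

lemma succ0 : (0 : Fin 3).succ = 1 := rfl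
lemma succ1 : (1 : Fin 3).succ = 2 := rfl
lemma succ2 : (2 : Fin 3).succ = 3 := rfl

lemma key {E B : Pt → Fin 3 → ℝ} (hE : Differentiable ℝ E) (hB : Differentiable ℝ B)
    (x : Pt) :
    divNeg (fun y => cF (fun i => (E y i : ℂ) + Complex.I * B y i)) x
      = Fin.cons (Complex.ofReal (divg E x) + Complex.I * Complex.ofReal (divg B x))
          (fun k => Complex.ofReal (curl B x k - pdtV E x k)
            + Complex.I * Complex.ofReal (-(curl E x k + pdtV B x k))) := by
  funext i
  refine Fin.cases ?_ (fun k => ?_) i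
  · simp only [divNeg, Fin.cons_zero, Fin.sum_univ_three, cF, blockM, Pi.smul_apply,
      smul_eq_mul, Matrix.cons_val', Matrix.cons_val_zero, Matrix.cons_val_one,
      Matrix.head_cons, Matrix.empty_val', Matrix.cons_val_fin_one, Matrix.of_apply,
      Matrix.cons_val_succ, Matrix.cons_val_two, Matrix.tail_cons, neg_mul, neg_neg,
      succ0, succ1, succ2]
    rw [pd_zeroC, pd_A hE hB, pd_A hE hB, pd_A hE hB]
    simp only [divg, Fin.sum_univ_three, succ0, succ1, succ2]
    push_cast
    ring
  · simp only [Fin.cons_succ]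
    fin_cases k
    all_goals
      simp only [divNeg, Fin.sum_univ_three, cF, blockM, Pi.smul_apply,
        smul_eq_mul, Matrix.cons_val', Matrix.cons_val_zero, Matrix.cons_val_one,
        Matrix.head_cons, Matrix.empty_val', Matrix.cons_val_fin_one, Matrix.of_apply,
        Matrix.cons_val_succ, Matrix.cons_val_two, Matrix.cons_val_three,
        Matrix.tail_cons, Matrix.head_fin_const, Fin.mk_zero,
        Fin.mk_one, fin3_mk2, neg_mul, neg_neg, succ0, succ1, succ2, Fin.isValue]
      simp only [pd_A hE hB, pd_cA hE hB, pd_cA' hE hB, pd_zeroC, curl, pdtV,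
        Matrix.cons_val_zero, Matrix.cons_val_one, Matrix.head_cons,
        Matrix.cons_val_two, Matrix.cons_val_three, Matrix.tail_cons, Matrix.head_fin_const,
        succ0, succ1, succ2, Fin.mk_zero,
        Fin.mk_one, fin3_mk2, Fin.isValue]
      push_cast
      push_cast
      first
      | ring1
      | (ring_nf; simp only [Complex.I_sq]; ring1)
      | (simp only [Complex.I_sq]; ring1)

theorem maxwell_single_complex_equation
    (E B : Pt → Fin 3 → ℝ) (ρ : Pt → ℝ) (J : Pt → Fin 3 → ℝ)
    (hE : ContDiff ℝ (⊤ : ℕ∞) E) (hB : ContDiff ℝ (⊤ : ℕ∞) B)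
    (hρ : ContDiff ℝ (⊤ : ℕ∞) ρ) (hJ : ContDiff ℝ (⊤ : ℕ∞) J) :
    (∀ x, divNeg (fun y => cF (fun i => (E y i : ℂ) + Complex.I * B y i)) x
        = Fin.cons ((ρ x : ℂ)) (fun i => (J x i : ℂ))) ↔
      MaxwellEq E B ρ J := by
  have hE' : Differentiable ℝ E := hE.differentiable (by simp)
  have hB' : Differentiable ℝ B := hB.differentiable (by simp)
  constructor
  · intro h
    refine ⟨fun x k => ?_, fun x k => ?_, fun x => ?_, fun x => ?_⟩
    · have h1 := congrFun (h x) k.succ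
      rw [key hE' hB'] at h1
      simp only [Fin.cons_succ] at h1
      have h2 := congrArg Complex.im h1
      simp only [Complex.add_im, Complex.ofReal_im, Complex.mul_im, Complex.I_re,
        Complex.I_im, zero_mul, one_mul, zero_add, Complex.ofReal_re] at h2
      linarith
    · have h1 := congrFun (h x) k.succ
      rw [key hE' hB'] at h1
      simp only [Fin.cons_succ] at h1
      have h2 := congrArg Complex.re h1
      simpa using h2
    · have h1 := congrFun (h x) 0
      rw [key hE' hB'] at h1
      simp only [Fin.cons_zero] at h1
      have h2 := congrArg Complex.re h1
      simpa using h2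
    · have h1 := congrFun (h x) 0
      rw [key hE' hB'] at h1
      simp only [Fin.cons_zero] at h1
      have h2 := congrArg Complex.im h1
      simp only [Complex.add_im, Complex.ofReal_im, Complex.mul_im, Complex.I_re,
        Complex.I_im, zero_mul, one_mul, zero_add, Complex.ofReal_re] at h2
      linarith
  · rintro ⟨m1, m2, m3, m4⟩ x
    rw [key hE' hB']
    funext i
    refine Fin.cases ?_ (fun k => ?_) i
    · simp [m3 x, m4 x]
    · have e1 := m1 x k
      have e2 := m2 x k
      simp only [Fin.cons_succ]
      rw [e2, show curl E x k + pdtV B x k = 0 from e1]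
      simp
end
end

section
/- The sixteen 4×4 complex matrices {I, cE_i, c̄E_i, cE_i·c̄E_i : i = 1,2,3} form a basis of the complex vector space of 4×4 complex matrices; moreover each of these matrices is Hermitian, squares to the identity, and all except I have trace zero. -/
open Matrix

noncomputable section

/-- `cE_i = [[0, e_iᵗ],[e_i, ×(-i e_i)]]` for the standard basis `e_i` of ℝ³. -/
def cE (i : Fin 3) : Matrix (Fin 4) (Fin 4) ℂ := cF (fun j => if j = i then 1 else 0)

/-- `c̄E_i`, the entrywise complex conjugate of `cE_i`. -/
def cEbar (i : Fin 3) : Matrix (Fin 4) (Fin 4) ℂ := cFbar (fun j => if j = i then 1 else 0)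

/-- `![1, cE 0, cE 1, cE 2]`. -/
def cE' : Fin 4 → Matrix (Fin 4) (Fin 4) ℂ := ![1, cE 0, cE 1, cE 2]

/-- `![1, c̄E 0, c̄E 1, c̄E 2]`. -/
def cEbar' : Fin 4 → Matrix (Fin 4) (Fin 4) ℂ := ![1, cEbar 0, cEbar 1, cEbar 2]

/-- The sixteen matrices `I, cE_i, c̄E_j, cE_i·c̄E_j`. -/
def fam : Fin 4 × Fin 4 → Matrix (Fin 4) (Fin 4) ℂ := fun p => cE' p.1 * cEbar' p.2

/-! ### Gaussian-integer models of the sixteen matrices -/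

/-- Gaussian-integer model of `cE`. -/
def cEZ (i : Fin 3) : Matrix (Fin 4) (Fin 4) GaussianInt :=
  blockM (fun j => if j = i then 1 else 0)
    (fun j => -Zsqrtd.sqrtd * (if j = i then 1 else 0))

/-- Gaussian-integer model of `cEbar`. -/
def cEbarZ (i : Fin 3) : Matrix (Fin 4) (Fin 4) GaussianInt :=
  blockM (fun j => if j = i then 1 else 0)
    (fun j => Zsqrtd.sqrtd * (if j = i then 1 else 0))

/-- Gaussian-integer model of `fam`. -/
def famZ : Fin 4 × Fin 4 → Matrix (Fin 4) (Fin 4) GaussianInt :=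
  fun p => ![1, cEZ 0, cEZ 1, cEZ 2] p.1 * ![1, cEbarZ 0, cEbarZ 1, cEbarZ 2] p.2

lemma toComplex_sqrtd : GaussianInt.toComplex Zsqrtd.sqrtd = Complex.I := by
  have : (Zsqrtd.sqrtd : GaussianInt) = ⟨0, 1⟩ := rfl
  rw [this]
  simp [GaussianInt.toComplex_def']

lemma toComplex_star (z : GaussianInt) :
    GaussianInt.toComplex (star z) = star (GaussianInt.toComplex z) := by
  obtain ⟨x, y⟩ := z
  rw [Zsqrtd.star_mk]
  apply Complex.ext <;>
    simp [GaussianInt.toComplex_def', Complex.star_def]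

lemma cEZ_map (i : Fin 3) : (cEZ i).map GaussianInt.toComplex = cE i := by
  ext a b
  fin_cases i <;> fin_cases a <;> fin_cases b <;>
    simp [cEZ, cE, cF, blockM, Matrix.map_apply, toComplex_sqrtd, vecHead, vecTail]

lemma cEbarZ_map (i : Fin 3) : (cEbarZ i).map GaussianInt.toComplex = cEbar i := by
  ext a b
  fin_cases i <;> fin_cases a <;> fin_cases b <;>
    simp [cEbarZ, cEbar, cFbar, blockM, Matrix.map_apply, toComplex_sqrtd, vecHead, vecTail]

lemma famZ_map (p : Fin 4 × Fin 4) : (famZ p).map GaussianInt.toComplex = fam p := by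
  obtain ⟨a, b⟩ := p
  have h1 : ∀ a : Fin 4, (![1, cEZ 0, cEZ 1, cEZ 2] a).map GaussianInt.toComplex = cE' a := by
    intro a
    fin_cases a <;>
      simp [cE', cEZ_map, Matrix.map_one GaussianInt.toComplex (map_zero _) (map_one _)]
  have h2 : ∀ b : Fin 4,
      (![1, cEbarZ 0, cEbarZ 1, cEbarZ 2] b).map GaussianInt.toComplex = cEbar' b := by
    intro b
    fin_cases b <;>
      simp [cEbar', cEbarZ_map, Matrix.map_one GaussianInt.toComplex (map_zero _) (map_one _)]
  simp only [famZ, fam, Matrix.map_mul, h1, h2]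

lemma trace_map_toComplex (M : Matrix (Fin 4) (Fin 4) GaussianInt) :
    (M.map GaussianInt.toComplex).trace = GaussianInt.toComplex M.trace := by
  simp [Matrix.trace, Matrix.diag, Matrix.map_apply]

lemma famZ_sq : ∀ p, famZ p * famZ p = 1 := by decide
lemma famZ_herm : ∀ p, (famZ p)ᴴ = famZ p := by decide
lemma famZ_tr : ∀ p, p ≠ (0, 0) → (famZ p).trace = 0 := by decide
lemma famZ_pair : ∀ p q, (famZ p * famZ q).trace = if p = q then 4 else 0 := by decide

lemma fam_sq (p : Fin 4 × Fin 4) : fam p * fam p = 1 := by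
  rw [← famZ_map, ← Matrix.map_mul (f := GaussianInt.toComplex), famZ_sq]
  exact Matrix.map_one _ (map_zero _) (map_one _)

lemma fam_herm (p : Fin 4 × Fin 4) : (fam p).IsHermitian := by
  rw [Matrix.IsHermitian, ← famZ_map,
    ← Matrix.conjTranspose_map GaussianInt.toComplex (fun z => toComplex_star z),
    famZ_herm]

lemma fam_trace (p : Fin 4 × Fin 4) (hp : p ≠ (0, 0)) : (fam p).trace = 0 := by
  rw [← famZ_map, trace_map_toComplex, famZ_tr p hp, map_zero]

lemma fam_pair (p q : Fin 4 × Fin 4) :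
    (fam p * fam q).trace = if p = q then 4 else 0 := by
  rw [← famZ_map, ← famZ_map, ← Matrix.map_mul (f := GaussianInt.toComplex),
    trace_map_toComplex, famZ_pair]
  split <;> simp [map_ofNat]

lemma fam_li : LinearIndependent ℂ fam := by
  rw [Fintype.linearIndependent_iff]
  intro g hg q
  have key : (∑ p, g p * (fam q * fam p).trace) = 0 := by
    have := congrArg (fun A => (fam q * A).trace) hg
    simpa [Matrix.mul_sum, Matrix.trace_sum, Matrix.mul_smul] using this
  rw [Finset.sum_congr rfl (fun p _ => by rw [fam_pair])] at key
  simp only [mul_ite, mul_zero, Finset.sum_ite_eq, Finset.mem_univ, if_true] at key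
  rcases mul_eq_zero.mp key with h | h
  · exact h
  · norm_num at h

theorem sixteen_matrices_basis :
    LinearIndependent ℂ fam ∧
    Submodule.span ℂ (Set.range fam) = (⊤ : Submodule ℂ (Matrix (Fin 4) (Fin 4) ℂ)) ∧
    (∀ p, (fam p).IsHermitian) ∧
    (∀ p, fam p * fam p = 1) ∧
    (∀ p, p ≠ (0, 0) → (fam p).trace = 0) := by
  refine ⟨fam_li, ?_, fam_herm, fam_sq, fam_trace⟩
  apply fam_li.span_eq_top_of_card_eq_finrank
  rw [Module.finrank_matrix]
  simp
end
end

section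
/- Let F = [[0, Eᵗ],[E, ×B]] with smooth E, B satisfying Maxwell's equations with sources ρ, J, and let T_F := (1/2)·cF·c̄F where cF = F - iF* and c̄F is its complex conjugate. Then the divergence of the stress-energy tensor equals the Lorentz force: T_F·(-∂ₜ, ∇)ᵗ = F·(ρ, J)ᵗ. -/
open Matrix

noncomputable section

/-! ### Auxiliary material for the proof -/

/-- The (real) stress-energy tensor. -/
def Sm (e b : Fin 3 → ℝ) : Matrix (Fin 4) (Fin 4) ℝ :=
  !![1/2*(e 0*e 0+e 1*e 1+e 2*e 2+b 0*b 0+b 1*b 1+b 2*b 2),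
       e 2*b 1 - e 1*b 2,  e 0*b 2 - e 2*b 0,  e 1*b 0 - e 0*b 1;
     e 1*b 2 - e 2*b 1,
       1/2*(e 0*e 0+b 0*b 0-e 1*e 1-b 1*b 1-e 2*e 2-b 2*b 2),
       e 0*e 1 + b 0*b 1,  e 0*e 2 + b 0*b 2;
     e 2*b 0 - e 0*b 2,
       e 0*e 1 + b 0*b 1,
       1/2*(e 1*e 1+b 1*b 1-e 0*e 0-b 0*b 0-e 2*e 2-b 2*b 2),
       e 1*e 2 + b 1*b 2;
     e 0*b 1 - e 1*b 0,
       e 0*e 2 + b 0*b 2,  e 1*e 2 + b 1*b 2,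
       1/2*(e 2*e 2+b 2*b 2-e 0*e 0-b 0*b 0-e 1*e 1-b 1*b 1)]

set_option maxHeartbeats 2000000 in
lemma Tmap (e b : Fin 3 → ℝ) :
    ((1:ℂ)/2) • (cF (fun i => (e i : ℂ) + Complex.I * b i) *
      cFbar (fun i => (e i : ℂ) - Complex.I * b i)) = (Sm e b).map (Complex.ofReal) := by
  ext i j
  fin_cases i <;> fin_cases j <;>
  · simp [cF, cFbar, blockM, Sm, Matrix.mul_apply, Fin.sum_univ_four]
    ring_nf
    simp only [Complex.I_sq, show Complex.I^3 = -Complex.I by rw [pow_succ, Complex.I_sq]; ring,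
      show Complex.I^4 = 1 by rw [show (4:ℕ)=2+2 from rfl, pow_add, Complex.I_sq]; ring]
    push_cast
    ring

lemma pd_add {𝔸 : Type*} [NormedRing 𝔸] [NormedAlgebra ℝ 𝔸] {f g : Pt → 𝔸} {x : Pt}
    (hf : DifferentiableAt ℝ f x) (hg : DifferentiableAt ℝ g x) (i : Fin 4) :
    pd i (fun y => f y + g y) x = pd i f x + pd i g x := by
  simp [pd, fderiv_fun_add hf hg]

lemma pd_sub {𝔸 : Type*} [NormedRing 𝔸] [NormedAlgebra ℝ 𝔸] {f g : Pt → 𝔸} {x : Pt}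
    (hf : DifferentiableAt ℝ f x) (hg : DifferentiableAt ℝ g x) (i : Fin 4) :
    pd i (fun y => f y - g y) x = pd i f x - pd i g x := by
  simp [pd, fderiv_fun_sub hf hg]

lemma pd_neg {𝔸 : Type*} [NormedRing 𝔸] [NormedAlgebra ℝ 𝔸] {f : Pt → 𝔸} {x : Pt}
    (i : Fin 4) : pd i (fun y => -(f y)) x = -pd i f x := by
  simp [pd, fderiv_neg]

lemma pd_mul {𝔸 : Type*} [NormedCommRing 𝔸] [NormedAlgebra ℝ 𝔸] {f g : Pt → 𝔸} {x : Pt}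
    (hf : DifferentiableAt ℝ f x) (hg : DifferentiableAt ℝ g x) (i : Fin 4) :
    pd i (fun y => f y * g y) x = pd i f x * g x + f x * pd i g x := by
  simp [pd, fderiv_fun_mul hf hg, smul_eq_mul]; ring

lemma pd_const {𝔸 : Type*} [NormedRing 𝔸] [NormedAlgebra ℝ 𝔸] {x : Pt} (c : 𝔸) (i : Fin 4) :
    pd i (fun _ => c) x = 0 := by
  simp [pd]

lemma pd_const_mul {𝔸 : Type*} [NormedCommRing 𝔸] [NormedAlgebra ℝ 𝔸] {f : Pt → 𝔸} {x : Pt}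
    (hf : DifferentiableAt ℝ f x) (c : 𝔸) (i : Fin 4) :
    pd i (fun y => c * f y) x = c * pd i f x := by
  simp [pd, fderiv_const_mul hf c]

@[fun_prop] lemma differentiable_ofReal' : Differentiable ℝ Complex.ofReal :=
  Complex.ofRealCLM.differentiable

lemma pd_ofReal {f : Pt → ℝ} {x : Pt} (hf : DifferentiableAt ℝ f x) (i : Fin 4) :
    pd i (fun y => (f y : ℂ)) x = ((pd i f x : ℝ) : ℂ) := by
  have h : (fun y => ((f y : ℝ) : ℂ)) = ⇑Complex.ofRealCLM ∘ f := rfl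
  unfold pd
  rw [h, fderiv_comp x Complex.ofRealCLM.differentiableAt hf]
  simp

set_option maxHeartbeats 4000000 in
theorem stress_energy_divergence_is_lorentz_force
    (E B : Pt → Fin 3 → ℝ) (ρ : Pt → ℝ) (J : Pt → Fin 3 → ℝ)
    (hE : ContDiff ℝ (⊤ : ℕ∞) E) (hB : ContDiff ℝ (⊤ : ℕ∞) B)
    (hρ : ContDiff ℝ (⊤ : ℕ∞) ρ) (hJ : ContDiff ℝ (⊤ : ℕ∞) J)
    (hM : MaxwellEq E B ρ J) :
    ∀ x, divNeg (fun y => ((1 : ℂ)/2) •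
            (cF (fun i => (E y i : ℂ) + Complex.I * B y i) *
             cFbar (fun i => (E y i : ℂ) - Complex.I * B y i))) x
        = (blockM (fun i => (E x i : ℂ)) (fun i => (B x i : ℂ))).mulVec
            (Fin.cons ((ρ x : ℂ)) (fun i => (J x i : ℂ))) := by
  intro x
  obtain ⟨m1, m2, m3, m4⟩ := hM
  have hEa : ∀ a, Differentiable ℝ (fun y => E y a) :=
    fun a => (contDiff_pi.mp hE a).differentiable (by simp)
  have hBa : ∀ a, Differentiable ℝ (fun y => B y a) :=
    fun a => (contDiff_pi.mp hB a).differentiable (by simp)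
  have hE0 := hEa 0; have hE1 := hEa 1; have hE2 := hEa 2
  have hB0 := hBa 0; have hB1 := hBa 1; have hB2 := hBa 2
  have hEc : ∀ a, Differentiable ℝ (fun y => ((E y a : ℝ) : ℂ)) :=
    fun a => Complex.ofRealCLM.differentiable.comp (hEa a)
  have hBc : ∀ a, Differentiable ℝ (fun y => ((B y a : ℝ) : ℂ)) :=
    fun a => Complex.ofRealCLM.differentiable.comp (hBa a)
  have hE0c := hEc 0; have hE1c := hEc 1; have hE2c := hEc 2
  have hB0c := hBc 0; have hB1c := hBc 1; have hB2c := hBc 2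
  have hc0 : (Fin.cons ((ρ x : ℂ)) (fun i => (J x i : ℂ)) : Fin 4 → ℂ) (0 : Fin 4) = (ρ x : ℂ) := rfl
  have hc1 : (Fin.cons ((ρ x : ℂ)) (fun i => (J x i : ℂ)) : Fin 4 → ℂ) (1 : Fin 4) = (J x 0 : ℂ) := rfl
  have hc2 : (Fin.cons ((ρ x : ℂ)) (fun i => (J x i : ℂ)) : Fin 4 → ℂ) (2 : Fin 4) = (J x 1 : ℂ) := rfl
  have hc3 : (Fin.cons ((ρ x : ℂ)) (fun i => (J x i : ℂ)) : Fin 4 → ℂ) (3 : Fin 4) = (J x 2 : ℂ) := rfl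
  have hfun : (fun y => ((1 : ℂ)/2) •
            (cF (fun i => (E y i : ℂ) + Complex.I * B y i) *
             cFbar (fun i => (E y i : ℂ) - Complex.I * B y i)))
      = fun y => (Sm (E y) (B y)).map (Complex.ofReal) :=
    funext fun y => Tmap (E y) (B y)
  rw [hfun]
  have s0 : (0 : Fin 3).succ = 1 := rfl
  have s1 : (1 : Fin 3).succ = 2 := rfl
  have s2 : (2 : Fin 3).succ = 3 := rfl
  have e1_0 : pd 2 (fun y => E y 2) x - pd 3 (fun y => E y 1) x
      + pd 0 (fun y => B y 0) x = 0 := by simpa [curl, pdtV] using m1 x 0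
  have e1_1 : pd 3 (fun y => E y 0) x - pd 1 (fun y => E y 2) x
      + pd 0 (fun y => B y 1) x = 0 := by simpa [curl, pdtV] using m1 x 1
  have e1_2 : pd 1 (fun y => E y 1) x - pd 2 (fun y => E y 0) x
      + pd 0 (fun y => B y 2) x = 0 := by simpa [curl, pdtV] using m1 x 2
  have e2_0 : pd 2 (fun y => B y 2) x - pd 3 (fun y => B y 1) x
      - pd 0 (fun y => E y 0) x = J x 0 := by simpa [curl, pdtV] using m2 x 0
  have e2_1 : pd 3 (fun y => B y 0) x - pd 1 (fun y => B y 2) x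
      - pd 0 (fun y => E y 1) x = J x 1 := by simpa [curl, pdtV] using m2 x 1
  have e2_2 : pd 1 (fun y => B y 1) x - pd 2 (fun y => B y 0) x
      - pd 0 (fun y => E y 2) x = J x 2 := by simpa [curl, pdtV] using m2 x 2
  have e3 : pd 1 (fun y => E y 0) x + pd 2 (fun y => E y 1) x + pd 3 (fun y => E y 2) x
      = ρ x := by simpa [divg, Fin.sum_univ_three, s0, s1, s2] using m3 x
  have e4 : pd 1 (fun y => B y 0) x + pd 2 (fun y => B y 1) x + pd 3 (fun y => B y 2) x
      = 0 := by simpa [divg, Fin.sum_univ_three, s0, s1, s2] using m4 x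
  have c1_0 : ((pd 2 (fun y => E y 2) x : ℝ) : ℂ) - pd 3 (fun y => E y 1) x
      + pd 0 (fun y => B y 0) x = 0 := by exact_mod_cast e1_0
  have c1_1 : ((pd 3 (fun y => E y 0) x : ℝ) : ℂ) - pd 1 (fun y => E y 2) x
      + pd 0 (fun y => B y 1) x = 0 := by exact_mod_cast e1_1
  have c1_2 : ((pd 1 (fun y => E y 1) x : ℝ) : ℂ) - pd 2 (fun y => E y 0) x
      + pd 0 (fun y => B y 2) x = 0 := by exact_mod_cast e1_2
  have c2_0 : ((pd 2 (fun y => B y 2) x : ℝ) : ℂ) - pd 3 (fun y => B y 1) x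
      - pd 0 (fun y => E y 0) x = ((J x 0 : ℝ) : ℂ) := by exact_mod_cast e2_0
  have c2_1 : ((pd 3 (fun y => B y 0) x : ℝ) : ℂ) - pd 1 (fun y => B y 2) x
      - pd 0 (fun y => E y 1) x = ((J x 1 : ℝ) : ℂ) := by exact_mod_cast e2_1
  have c2_2 : ((pd 1 (fun y => B y 1) x : ℝ) : ℂ) - pd 2 (fun y => B y 0) x
      - pd 0 (fun y => E y 2) x = ((J x 2 : ℝ) : ℂ) := by exact_mod_cast e2_2
  have c3 : ((pd 1 (fun y => E y 0) x : ℝ) : ℂ) + pd 2 (fun y => E y 1) x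
      + pd 3 (fun y => E y 2) x = ((ρ x : ℝ) : ℂ) := by exact_mod_cast e3
  have c4 : ((pd 1 (fun y => B y 0) x : ℝ) : ℂ) + pd 2 (fun y => B y 1) x
      + pd 3 (fun y => B y 2) x = 0 := by exact_mod_cast e4
  funext i
  fin_cases i
  · simp [divNeg, Sm, Matrix.map_apply, Fin.sum_univ_three, s0, s1, s2,
      blockM, Matrix.mulVec, dotProduct, Fin.sum_univ_four, hc0, hc1, hc2, hc3]
    simp (disch := fun_prop) only [pd_ofReal, pd_add, pd_sub, pd_neg, pd_mul, pd_const_mul, pd_const]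
    push_cast
    linear_combination ((E x 0 : ℝ) : ℂ) * c2_0 + ((E x 1 : ℝ) : ℂ) * c2_1
      + ((E x 2 : ℝ) : ℂ) * c2_2 - ((B x 0 : ℝ) : ℂ) * c1_0
      - ((B x 1 : ℝ) : ℂ) * c1_1 - ((B x 2 : ℝ) : ℂ) * c1_2
  · simp [divNeg, Sm, Matrix.map_apply, Fin.sum_univ_three, s0, s1, s2,
      blockM, Matrix.mulVec, dotProduct, Fin.sum_univ_four, hc0, hc1, hc2, hc3]
    simp (disch := fun_prop) only [pd_ofReal, pd_add, pd_sub, pd_neg, pd_mul, pd_const_mul, pd_const]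
    push_cast
    linear_combination ((E x 2 : ℝ) : ℂ) * c1_1 - ((E x 1 : ℝ) : ℂ) * c1_2
      + ((B x 2 : ℝ) : ℂ) * c2_1 - ((B x 1 : ℝ) : ℂ) * c2_2
      + ((E x 0 : ℝ) : ℂ) * c3 + ((B x 0 : ℝ) : ℂ) * c4
  · simp [divNeg, Sm, Matrix.map_apply, Fin.sum_univ_three, s0, s1, s2,
      blockM, Matrix.mulVec, dotProduct, Fin.sum_univ_four, hc0, hc1, hc2, hc3]
    simp (disch := fun_prop) only [pd_ofReal, pd_add, pd_sub, pd_neg, pd_mul, pd_const_mul, pd_const]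
    push_cast
    linear_combination -((E x 2 : ℝ) : ℂ) * c1_0 + ((E x 0 : ℝ) : ℂ) * c1_2
      - ((B x 2 : ℝ) : ℂ) * c2_0 + ((B x 0 : ℝ) : ℂ) * c2_2
      + ((E x 1 : ℝ) : ℂ) * c3 + ((B x 1 : ℝ) : ℂ) * c4
  · simp [divNeg, Sm, Matrix.map_apply, Fin.sum_univ_three, s0, s1, s2,
      blockM, Matrix.mulVec, dotProduct, Fin.sum_univ_four, hc0, hc1, hc2, hc3]
    simp (disch := fun_prop) only [pd_ofReal, pd_add, pd_sub, pd_neg, pd_mul, pd_const_mul, pd_const]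
    push_cast
    linear_combination ((E x 1 : ℝ) : ℂ) * c1_0 - ((E x 0 : ℝ) : ℂ) * c1_1
      + ((B x 1 : ℝ) : ℂ) * c2_0 - ((B x 0 : ℝ) : ℂ) * c2_1
      + ((E x 2 : ℝ) : ℂ) * c3 + ((B x 2 : ℝ) : ℂ) * c4
end
end
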